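/- If S ⊆ ℝ³ is a set such that for every ε > 0 there exists r₀ > 0 so that for all x ∈ S and all 0 < r < r₀ there is an affine line A ⊆ ℝ³ with S ∩ B(x, r) ⊆ {y : dist(y, A) < ε·r}, then the Hausdorff dimension of S is at most 1. -/

import Mathlib

open Metric MeasureTheory Filter
open scoped RealInnerProductSpace ENNReal NNReal Topology

local notation "E3" => EuclideanSpace ℝ (Fin 3)

/-- An affine line in `ℝ³`, given as the set `{p + t • v}` for some `v ≠ 0`. -/
def IsAffineLine (A : Set (EuclideanSpace ℝ (Fin 3))) : Prop :=
  ∃ (p v : EuclideanSpace ℝ (Fin 3)), v ≠ 0 ∧ A = {y | ∃ t : ℝ, y = p + t • v}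

set_option maxHeartbeats 1000000 in
/-- One-scale covering: a flat piece is covered by `⌊4/ε⌋+1` balls of radius `4εr`
centered at points of `S`. -/
lemma cover_step (S : Set E3) (ε r : ℝ) (hε : 0 < ε) (hε1 : ε ≤ 1)
    (x : E3) (hx : x ∈ S) (hr : 0 < r)
    (A : Set E3) (hA : IsAffineLine A)
    (hflat : S ∩ ball x r ⊆ {y | infDist y A < ε * r}) :
    ∃ c : Fin (⌊4/ε⌋₊ + 1) → E3, (∀ j, c j ∈ S) ∧
      S ∩ ball x r ⊆ ⋃ j, ball (c j) (4 * ε * r) := by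
  obtain ⟨p, v, hv, rfl⟩ := hA
  set u : E3 := ‖v‖⁻¹ • v with hu_def
  have hnv : (0:ℝ) < ‖v‖ := norm_pos_iff.mpr hv
  have hu : ‖u‖ = 1 := by
    rw [hu_def, norm_smul, norm_inv, norm_norm, inv_mul_cancel₀ hnv.ne']
  set s₀ : ℝ := ⟪u, x - p⟫ with hs₀
  -- the grid on the line
  set g : Fin (⌊4/ε⌋₊ + 1) → E3 := fun j => p + (s₀ - 2*r + (j:ℝ) * (ε*r)) • u with hg
  -- every point of S ∩ ball x r is within 2εr of some grid point
  have key : ∀ y ∈ S ∩ ball x r, ∃ j, dist y (g j) < 2 * (ε * r) := by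
    intro y hy
    have hne : ({z | ∃ t : ℝ, z = p + t • v} : Set E3).Nonempty := ⟨p, 0, by simp⟩
    have h1 : infDist y {z | ∃ t : ℝ, z = p + t • v} < ε * r := hflat hy
    obtain ⟨a, ⟨t, rfl⟩, hay⟩ := (infDist_lt_iff hne).mp h1
    set s : ℝ := t * ‖v‖ with hsdef
    have hsu : s • u = t • v := by
      rw [hu_def, smul_smul, hsdef]; congr 1; field_simp
    have ha : p + t • v = p + s • u := by rw [hsu]
    have hinner : ⟪u, (p + s • u) - p⟫ = s := by
      rw [add_sub_cancel_left, real_inner_smul_right, real_inner_self_eq_norm_mul_norm, hu]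
      ring
    have hss₀ : |s - s₀| < 2 * r := by
      have h2' : ⟪u, (p + s • u) - x⟫ = s - ⟪u, x - p⟫ := by
        rw [show (p + s • u) - x = ((p + s • u) - p) - (x - p) by abel, inner_sub_right, hinner]
      have h2 : s - s₀ = ⟪u, (p + s • u) - x⟫ := by rw [h2', hs₀]
      have h3 : |⟪u, (p + s • u) - x⟫| ≤ ‖(p + s • u) - x‖ := by
        calc |⟪u, (p + s • u) - x⟫| ≤ ‖u‖ * ‖(p + s • u) - x‖ := abs_real_inner_le_norm _ _
        _ = ‖(p + s • u) - x‖ := by rw [hu, one_mul]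
      have h4 : ‖(p + s • u) - x‖ ≤ ‖(p + s • u) - y‖ + ‖y - x‖ := by
        have := dist_triangle (p + s • u) y x
        simpa [dist_eq_norm] using this
      have h5 : ‖(p + s • u) - y‖ < ε * r := by
        rw [← ha]; rw [dist_comm] at hay; rwa [dist_eq_norm] at hay
      have h6 : ‖y - x‖ < r := by
        have := hy.2; rwa [mem_ball, dist_eq_norm] at this
      rw [h2]
      calc |⟪u, (p + s • u) - x⟫| ≤ ‖(p + s • u) - x‖ := h3
        _ < ε * r + r := by linarith [h4]
        _ ≤ 2 * r := by nlinarith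
    -- pick the grid index
    set q : ℝ := (s - (s₀ - 2*r)) / (ε * r) with hq
    have hεr : (0:ℝ) < ε * r := mul_pos hε hr
    have hq0 : 0 ≤ q := by
      apply div_nonneg _ hεr.le
      have := abs_lt.mp hss₀
      linarith [this.1]
    have hq4 : q < 4 / ε := by
      rw [hq, div_lt_div_iff₀ hεr hε]
      have := abs_lt.mp hss₀
      nlinarith [this.2]
    have hjlt : ⌊q⌋₊ < ⌊4/ε⌋₊ + 1 := by
      have : ⌊q⌋₊ ≤ ⌊4/ε⌋₊ := Nat.floor_le_floor hq4.le
      omega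
    set j0 : Fin (⌊4/ε⌋₊ + 1) := ⟨⌊q⌋₊, hjlt⟩ with hj0
    refine ⟨j0, ?_⟩
    · have hfl : (⌊q⌋₊ : ℝ) ≤ q := Nat.floor_le hq0
      have hfl2 : q < ⌊q⌋₊ + 1 := Nat.lt_floor_add_one q
      have hdist2 : dist (p + s • u) (g j0) < ε * r := by
        rw [hg, dist_eq_norm]
        simp only
        rw [show (p + s • u) - (p + (s₀ - 2*r + (⌊q⌋₊:ℝ) * (ε*r)) • u)
            = (s - (s₀ - 2*r + (⌊q⌋₊:ℝ) * (ε*r))) • u by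
          rw [sub_smul]; abel]
        rw [norm_smul, hu, mul_one, Real.norm_eq_abs, abs_lt]
        have hqs : s = q * (ε * r) + (s₀ - 2*r) := by
          rw [hq]; field_simp; ring
        have e1 : s - (s₀ - 2*r + (⌊q⌋₊:ℝ) * (ε*r)) = (q - ⌊q⌋₊) * (ε * r) := by
          rw [hqs]; ring
        rw [e1]
        constructor
        · nlinarith [mul_nonneg (sub_nonneg.mpr hfl) hεr.le]
        · nlinarith [mul_lt_mul_of_pos_right (show q - (⌊q⌋₊:ℝ) < 1 by linarith) hεr]
      calc dist y (g j0) ≤ dist y (p + s • u) + dist (p + s • u) (g j0) := dist_triangle _ _ _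
        _ < ε * r + ε * r := by
            have hay' : dist y (p + s • u) < ε * r := ha ▸ hay
            exact add_lt_add hay' hdist2
        _ = 2 * (ε * r) := by ring
  -- replace grid points with points of S
  classical
  refine ⟨fun j => if h : (S ∩ ball x r ∩ ball (g j) (2 * (ε * r))).Nonempty
    then h.choose else x, fun j => ?_, ?_⟩
  · by_cases h : (S ∩ ball x r ∩ ball (g j) (2 * (ε * r))).Nonempty
    · simp only [dif_pos h]; exact h.choose_spec.1.1
    · simp only [dif_neg h]; exact hx
  · intro y hy
    obtain ⟨j, hj⟩ := key y hy
    have hne : (S ∩ ball x r ∩ ball (g j) (2 * (ε * r))).Nonempty :=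
      ⟨y, hy, mem_ball.mpr hj⟩
    refine Set.mem_iUnion.mpr ⟨j, ?_⟩
    rw [mem_ball]
    simp only [dif_pos hne]
    have h1 : dist hne.choose (g j) < 2 * (ε * r) := mem_ball.mp hne.choose_spec.2
    calc dist y hne.choose ≤ dist y (g j) + dist (g j) hne.choose := dist_triangle _ _ _
      _ < 2 * (ε * r) + 2 * (ε * r) := by rw [dist_comm (g j)]; exact add_lt_add hj h1
      _ = 4 * ε * r := by ring

lemma iterate_cover (S : Set E3) (ε : ℝ) (hε : 0 < ε) (hε8 : ε ≤ 1/8)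
    (r₀ : ℝ)
    (hcov : ∀ x ∈ S, ∀ r : ℝ, 0 < r → r < r₀ →
      ∃ c : Fin (⌊4/ε⌋₊ + 1) → E3, (∀ j, c j ∈ S) ∧
        S ∩ ball x r ⊆ ⋃ j, ball (c j) (4*ε*r))
    (x₀ : E3) (hx₀ : x₀ ∈ S) (r : ℝ) (hr : 0 < r) (hrr₀ : r < r₀) (k : ℕ) :
    ∃ c : (Fin k → Fin (⌊4/ε⌋₊ + 1)) → E3, (∀ f, c f ∈ S) ∧
      S ∩ ball x₀ r ⊆ ⋃ f, ball (c f) ((4*ε)^k * r) := by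
  induction k with
  | zero =>
    refine ⟨fun _ => x₀, fun _ => hx₀, ?_⟩
    intro y hy
    exact Set.mem_iUnion.mpr ⟨fun i => i.elim0, by simpa using hy.2⟩
  | succ k ih =>
    obtain ⟨c, hcS, hcov'⟩ := ih
    have h4ε : 0 < 4*ε := by linarith
    have h4ε1 : 4*ε ≤ 1 := by linarith
    have hρ : 0 < (4*ε)^k * r := by positivity
    have hρ' : (4*ε)^k * r < r₀ := by
      have h1 : (4*ε)^k ≤ 1 := pow_le_one₀ h4ε.le h4ε1
      nlinarith
    choose d hdS hdcov using fun f => hcov (c f) (hcS f) ((4*ε)^k * r) hρ hρ'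
    refine ⟨fun g => d (fun i => g i.succ) (g 0), fun g => hdS _ _, ?_⟩
    intro y hy
    obtain ⟨f, hf⟩ := Set.mem_iUnion.mp (hcov' hy)
    have hy2 : y ∈ S ∩ ball (c f) ((4*ε)^k * r) := ⟨hy.1, hf⟩
    obtain ⟨j, hj⟩ := Set.mem_iUnion.mp (hdcov f hy2)
    refine Set.mem_iUnion.mpr ⟨Fin.cons j f, ?_⟩
    have hfs : (fun i : Fin k => (Fin.cons j f : Fin (k+1) → Fin (⌊4/ε⌋₊ + 1)) i.succ) = f := by
      funext i; simp
    have hj0 : (Fin.cons j f : Fin (k+1) → Fin (⌊4/ε⌋₊ + 1)) 0 = j := rfl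
    simp only [hfs, hj0]
    have : 4*ε*((4*ε)^k * r) = (4*ε)^(k+1) * r := by ring
    rwa [← this]


lemma piece_zero (S : Set E3) (ε : ℝ) (hε : 0 < ε) (hε8 : ε ≤ 1/8)
    (d : ℝ) (hd0 : 0 ≤ d)
    (hq : ((⌊4/ε⌋₊ + 1 : ℕ) : ℝ) * (4*ε)^d < 1)
    (r₀ : ℝ)
    (hcov : ∀ x ∈ S, ∀ r : ℝ, 0 < r → r < r₀ →
      ∃ c : Fin (⌊4/ε⌋₊ + 1) → E3, (∀ j, c j ∈ S) ∧
        S ∩ ball x r ⊆ ⋃ j, ball (c j) (4*ε*r))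
    (x₀ : E3) (hx₀ : x₀ ∈ S) (r : ℝ) (hr : 0 < r) (hrr₀ : r < r₀) :
    μH[d] (S ∩ ball x₀ r) = 0 := by
  set M : ℕ := ⌊4/ε⌋₊ + 1 with hM
  have h4ε : 0 < 4*ε := by linarith
  have h4ε1 : 4*ε < 1 := by linarith
  -- choose covers at every scale
  have hex := iterate_cover S ε hε hε8 r₀ hcov x₀ hx₀ r hr hrr₀
  choose c hcS hccov using hex
  -- apply the liminf bound
  have hbound := MeasureTheory.Measure.hausdorffMeasure_le_liminf_sum d (S ∩ ball x₀ r)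
    (fun k => 2 * ENNReal.ofReal ((4*ε)^k * r))
    (by
      have h1 : Tendsto (fun k : ℕ => (4*ε)^k * r) atTop (𝓝 0) := by
        have := (tendsto_pow_atTop_nhds_zero_of_lt_one h4ε.le h4ε1).mul_const r
        simpa using this
      have h2 : Tendsto (fun k : ℕ => ENNReal.ofReal ((4*ε)^k * r)) atTop (𝓝 0) := by
        have := (ENNReal.continuous_ofReal.tendsto 0).comp h1
        simpa [Function.comp_def] using this
      have := ENNReal.Tendsto.const_mul h2 (Or.inr (ENNReal.ofNat_ne_top : (2:ℝ≥0∞) ≠ ⊤))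
      simpa using this)
    (fun k f => ball (c k f) ((4*ε)^k * r))
    (Eventually.of_forall fun k i => by
      calc EMetric.diam (ball (c k i) ((4*ε)^k * r))
          ≤ EMetric.diam (EMetric.ball (c k i) (ENNReal.ofReal ((4*ε)^k * r))) := by
            exact le_of_eq (congrArg EMetric.diam Metric.eball_ofReal.symm)
        _ ≤ 2 * ENNReal.ofReal ((4*ε)^k * r) := EMetric.diam_ball)
    (Eventually.of_forall fun k => hccov k)
  -- bound the sum by a geometric sequence
  have hsum : ∀ k : ℕ, (∑ i : Fin k → Fin M, EMetric.diam (ball (c k i) ((4*ε)^k * r)) ^ d)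
      ≤ ENNReal.ofReal (((2*r)^d) * (((M:ℝ) * (4*ε)^d))^k) := by
    intro k
    have hρ : (0:ℝ) < (4*ε)^k * r := by positivity
    have hdiam : ∀ i : Fin k → Fin M,
        EMetric.diam (ball (c k i) ((4*ε)^k * r)) ^ d
          ≤ ENNReal.ofReal ((2 * ((4*ε)^k * r))^d) := by
      intro i
      have h1 : EMetric.diam (ball (c k i) ((4*ε)^k * r))
          ≤ ENNReal.ofReal (2 * ((4*ε)^k * r)) := by
        rw [ENNReal.ofReal_mul (by norm_num : (0:ℝ) ≤ 2)]
        calc EMetric.diam (ball (c k i) ((4*ε)^k * r))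
            ≤ EMetric.diam (EMetric.ball (c k i) (ENNReal.ofReal ((4*ε)^k * r))) := by
              exact le_of_eq (congrArg EMetric.diam Metric.eball_ofReal.symm)
          _ ≤ 2 * ENNReal.ofReal ((4*ε)^k * r) := EMetric.diam_ball
          _ = ENNReal.ofReal 2 * ENNReal.ofReal ((4*ε)^k * r) := by
              norm_num
      calc EMetric.diam (ball (c k i) ((4*ε)^k * r)) ^ d
          ≤ (ENNReal.ofReal (2 * ((4*ε)^k * r))) ^ d := ENNReal.rpow_le_rpow h1 hd0
        _ = ENNReal.ofReal ((2 * ((4*ε)^k * r))^d) :=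
            ENNReal.ofReal_rpow_of_pos (by positivity)
    calc (∑ i : Fin k → Fin M, EMetric.diam (ball (c k i) ((4*ε)^k * r)) ^ d)
        ≤ ∑ _i : Fin k → Fin M, ENNReal.ofReal ((2 * ((4*ε)^k * r))^d) :=
          Finset.sum_le_sum fun i _ => hdiam i
      _ = (M^k : ℕ) * ENNReal.ofReal ((2 * ((4*ε)^k * r))^d) := by
          rw [Finset.sum_const, Finset.card_univ]
          simp [Fintype.card_fun, nsmul_eq_mul]
      _ = ENNReal.ofReal ((M:ℝ)^k * (2 * ((4*ε)^k * r))^d) := by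
          rw [ENNReal.ofReal_mul (by positivity)]
          congr 1
          rw [← ENNReal.ofReal_natCast]
          push_cast
          ring_nf
      _ = ENNReal.ofReal (((2*r)^d) * (((M:ℝ) * (4*ε)^d))^k) := by
          congr 1
          have e1 : 2 * ((4*ε)^k * r) = (2*r) * (4*ε)^k := by ring
          rw [e1, Real.mul_rpow (by positivity) (by positivity)]
          rw [← Real.rpow_natCast (4*ε) k, ← Real.rpow_mul h4ε.le, mul_comm (k:ℝ) d,
            Real.rpow_mul h4ε.le, Real.rpow_natCast ((4*ε)^d) k]
          ring
  have hq0 : 0 ≤ (M:ℝ) * (4*ε)^d := by positivity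
  have htend : Tendsto (fun k : ℕ => ENNReal.ofReal (((2*r)^d) * (((M:ℝ) * (4*ε)^d))^k))
      atTop (𝓝 0) := by
    have h1 : Tendsto (fun k : ℕ => ((2*r)^d) * (((M:ℝ) * (4*ε)^d))^k) atTop (𝓝 0) := by
      have := (tendsto_pow_atTop_nhds_zero_of_lt_one hq0 hq).const_mul ((2*r)^d)
      simpa using this
    have := (ENNReal.continuous_ofReal.tendsto 0).comp h1
    simpa [Function.comp_def] using this
  have hlim : liminf (fun n : ℕ => ∑ i : Fin n → Fin M,
      EMetric.diam (ball (c n i) ((4*ε)^n * r)) ^ d) atTop = 0 := by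
    refine le_antisymm ?_ zero_le
    calc liminf (fun n : ℕ => ∑ i : Fin n → Fin M,
          EMetric.diam (ball (c n i) ((4*ε)^n * r)) ^ d) atTop
        ≤ liminf (fun k : ℕ => ENNReal.ofReal (((2*r)^d) * (((M:ℝ) * (4*ε)^d))^k)) atTop :=
          liminf_le_liminf (Eventually.of_forall hsum)
      _ = 0 := htend.liminf_eq
  exact le_antisymm (hbound.trans hlim.le) zero_le

theorem stmt_0 (S : Set (EuclideanSpace ℝ (Fin 3)))
    (hReif : ∀ ε > (0:ℝ), ∃ r₀ > (0:ℝ), ∀ x ∈ S, ∀ r : ℝ, 0 < r → r < r₀ →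
      ∃ A : Set (EuclideanSpace ℝ (Fin 3)), IsAffineLine A ∧
        S ∩ ball x r ⊆ {y | infDist y A < ε * r}) :
    dimH S ≤ 1 := by
  rcases S.eq_empty_or_nonempty with rfl | ⟨x₀, hx₀⟩
  · simp [dimH_empty]
  -- main claim: μH[d] S = 0 for every real d > 1
  have hzero : ∀ d : ℝ, 1 < d → μH[d] S = 0 := by
    intro d hd
    -- choose ε small enough
    set A : ℝ := 5 * (4:ℝ)^d with hA_def
    have hA : 0 < A := by
      have : (0:ℝ) < (4:ℝ)^d := Real.rpow_pos_of_pos (by norm_num) d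
      positivity
    set εd : ℝ := (1/(2*A))^(1/(d-1)) with hεd_def
    have hεd : 0 < εd := Real.rpow_pos_of_pos (by positivity) _
    set ε : ℝ := min (1/8) εd with hε_def
    have hε : 0 < ε := lt_min (by norm_num) hεd
    have hε8 : ε ≤ 1/8 := min_le_left _ _
    have hε1 : ε ≤ 1 := hε8.trans (by norm_num)
    set M : ℕ := ⌊4/ε⌋₊ + 1 with hM_def
    -- the key numeric inequality
    have key : (M:ℝ) * (4*ε)^d < 1 := by
      have hMle : (M:ℝ) ≤ 5/ε := by
        have h1 : (⌊4/ε⌋₊ : ℝ) ≤ 4/ε := Nat.floor_le (by positivity)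
        have h2 : (1:ℝ) ≤ 1/ε := by
          rw [le_one_div (by norm_num : (0:ℝ) < 1) hε]; simpa using hε1
        have : (M:ℝ) = (⌊4/ε⌋₊ : ℝ) + 1 := by rw [hM_def]; push_cast; ring
        rw [this]
        have : (4:ℝ)/ε + 1/ε = 5/ε := by ring
        linarith
      have hrw : (4*ε)^d = (4:ℝ)^d * ε^d :=
        Real.mul_rpow (by norm_num) hε.le
      have hpos : (0:ℝ) < (4*ε)^d := Real.rpow_pos_of_pos (by linarith) d
      have step1 : (M:ℝ) * (4*ε)^d ≤ (5/ε) * ((4:ℝ)^d * ε^d) := by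
        rw [← hrw]
        exact mul_le_mul_of_nonneg_right hMle hpos.le
      have step2 : (5/ε) * ((4:ℝ)^d * ε^d) = A * ε^(d-1) := by
        rw [Real.rpow_sub_one hε.ne' d, hA_def]
        field_simp
      have step3 : ε^(d-1) ≤ 1/(2*A) := by
        have h1 : ε^(d-1) ≤ εd^(d-1) :=
          Real.rpow_le_rpow hε.le (min_le_right _ _) (by linarith)
        have h2 : εd^(d-1) = 1/(2*A) := by
          rw [hεd_def, ← Real.rpow_mul (by positivity : (0:ℝ) ≤ 1/(2*A)), one_div (d-1),
            inv_mul_cancel₀ (by linarith : d - 1 ≠ 0), Real.rpow_one]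
        rw [← h2]; exact h1
      calc (M:ℝ) * (4*ε)^d ≤ A * ε^(d-1) := by rw [← step2]; exact step1
        _ ≤ A * (1/(2*A)) := by
            exact mul_le_mul_of_nonneg_left step3 hA.le
        _ = 1/2 := by field_simp
        _ < 1 := by norm_num
    obtain ⟨r₀, hr₀, hflat⟩ := hReif ε hε
    have hcov : ∀ x ∈ S, ∀ r : ℝ, 0 < r → r < r₀ →
        ∃ c : Fin (⌊4/ε⌋₊ + 1) → E3, (∀ j, c j ∈ S) ∧
          S ∩ ball x r ⊆ ⋃ j, ball (c j) (4*ε*r) := by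
      intro x hx r hr hrlt
      obtain ⟨A', hA', hsub⟩ := hflat x hx r hr hrlt
      exact cover_step S ε r hε hε1 x hx hr A' hA' hsub
    -- countable dense sequence in S
    have : Nonempty ↥S := ⟨⟨x₀, hx₀⟩⟩
    obtain ⟨u, hu⟩ := TopologicalSpace.exists_dense_seq ↥S
    have hcover : S ⊆ ⋃ n : ℕ, (S ∩ ball (↑(u n)) (r₀/2)) := by
      intro y hy
      obtain ⟨n, hn⟩ := hu.exists_dist_lt ⟨y, hy⟩ (half_pos hr₀)
      rw [Subtype.dist_eq] at hn
      exact Set.mem_iUnion.mpr ⟨n, hy, mem_ball.mpr hn⟩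
    refine measure_mono_null hcover (measure_iUnion_null fun n => ?_)
    exact piece_zero S ε hε hε8 d (by linarith) key r₀ hcov (↑(u n)) (u n).2 (r₀/2)
      (half_pos hr₀) (by linarith)
  apply dimH_le
  intro d' hinf
  by_contra hlt
  push_neg at hlt
  have h1 : (1:ℝ≥0) < d' := ENNReal.one_lt_coe_iff.mp hlt
  have h2 : (1:ℝ) < (d':ℝ) := by exact_mod_cast h1
  exact absurd hinf (by rw [hzero (d':ℝ) h2]; exact ENNReal.zero_ne_top)
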